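/- For n = 2, 4, 6, the polynomial P_n^{(1)}(r) - P_n^{(2)}(r) has all coefficients positive, where P_n^{(1)}(r) = (1 + r/n)^(n/2) and P_n^{(2)}(r) = (1/√e)·Σ_{i=0}^{n/2 - 1} (1+r)ⁱ/(2ⁱ i!). In particular, P_n^{(2)}(r) < P_n^{(1)}(r) for every r ≥ 0 when n ∈ {2,4,6}. -/

import Mathlib

open Polynomial

/-- `P_n^{(1)}(r) = (1 + r/n)^{n/2}` as a polynomial in `r`. -/
noncomputable def P1 (n : ℕ) : Polynomial ℝ :=
  (C 1 + C ((n : ℝ)⁻¹) * X) ^ (n / 2)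

/-- `P_n^{(2)}(r) = (1/√e) ∑_{i=0}^{n/2-1} (1+r)ⁱ/(2ⁱ i!)` as a polynomial in `r`. -/
noncomputable def P2 (n : ℕ) : Polynomial ℝ :=
  C (Real.sqrt (Real.exp 1))⁻¹ *
    ∑ i ∈ Finset.range (n / 2), C ((2 ^ i * i.factorial : ℝ))⁻¹ * (1 + X) ^ i

lemma hc0 : 0 < (Real.sqrt (Real.exp 1))⁻¹ := by positivity

lemma hc1 : (Real.sqrt (Real.exp 1))⁻¹ < 8/13 := by
  rw [inv_lt_comm₀ (Real.sqrt_pos.2 (Real.exp_pos 1)) (by norm_num)]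
  rw [show (8/13 : ℝ)⁻¹ = 13/8 by norm_num]
  rw [Real.lt_sqrt (by norm_num)]
  nlinarith [Real.exp_one_gt_d9]

lemma key2 : P1 2 - P2 2 =
    C (1 - (Real.sqrt (Real.exp 1))⁻¹) + C (1/2) * X := by
  apply Polynomial.funext; intro r
  simp [P1, P2, Finset.sum_range_succ]; ring

lemma key4 : P1 4 - P2 4 =
    C (1 - 3/2 * (Real.sqrt (Real.exp 1))⁻¹) +
      C (1/2 - 1/2 * (Real.sqrt (Real.exp 1))⁻¹) * X + C (1/16) * X^2 := by
  apply Polynomial.funext; intro r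
  simp [P1, P2, Finset.sum_range_succ]; ring

lemma key6 : P1 6 - P2 6 =
    C (1 - 13/8 * (Real.sqrt (Real.exp 1))⁻¹) +
      C (1/2 - 3/4 * (Real.sqrt (Real.exp 1))⁻¹) * X +
      C (1/12 - 1/8 * (Real.sqrt (Real.exp 1))⁻¹) * X^2 + C (1/216) * X^3 := by
  apply Polynomial.funext; intro r
  simp [P1, P2, Finset.sum_range_succ]; ring

theorem stmt_15 (n : ℕ) (hn : n = 2 ∨ n = 4 ∨ n = 6) :
    (∀ j : ℕ, j ≤ n / 2 → 0 < (P1 n - P2 n).coeff j) ∧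
    (∀ r : ℝ, 0 ≤ r → (P2 n).eval r < (P1 n).eval r) := by
  have h0 := hc0
  have h1 := hc1
  rcases hn with rfl | rfl | rfl <;>
      refine ⟨fun j hj => ?_, fun r hr => ?_⟩
  · norm_num at hj; interval_cases j <;>
    · rw [key2]
      simp only [sub_mul, coeff_sub, coeff_add, ← C_mul, coeff_C_mul, coeff_X_pow, coeff_C,
        coeff_X, coeff_one]
      norm_num
      try nlinarith
  · rw [← sub_pos, ← eval_sub, key2]
    simp
    nlinarith
  · norm_num at hj; interval_cases j <;>
    · rw [key4]
      simp only [sub_mul, coeff_sub, coeff_add, ← C_mul, coeff_C_mul, coeff_X_pow, coeff_C,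
        coeff_X, coeff_one]
      norm_num
      try nlinarith
  · rw [← sub_pos, ← eval_sub, key4]
    simp
    nlinarith [mul_nonneg hr hr]
  · norm_num at hj; interval_cases j <;>
    · rw [key6]
      simp only [sub_mul, coeff_sub, coeff_add, ← C_mul, coeff_C_mul, coeff_X_pow, coeff_C,
        coeff_X, coeff_one]
      norm_num
      try nlinarith
  · rw [← sub_pos, ← eval_sub, key6]
    simp
    nlinarith [mul_nonneg hr hr, mul_nonneg (mul_nonneg hr hr) hr]
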